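/- Let X be an (n−k)-dimensional linear subspace of ℓ∞ⁿ with 0 ≤ k < n. Then the equilateral number of X satisfies e(X) ≥ 2^{n−k} / (n−k)^k. -/

import Mathlib

open Matrix Finset Module

/-- Classification of a value `v ∈ [-m, m]` into one of `m` intervals of length 2. -/
noncomputable def clsIdx (m : ℕ) (v : ℝ) : ℤ := min ((m : ℤ) - 1) ⌊(v + m) / 2⌋

lemma clsIdx_spec (m : ℕ) (hm : 1 ≤ m) (v : ℝ) (h1 : -(m : ℝ) ≤ v) (h2 : v ≤ m) :
    0 ≤ clsIdx m v ∧ clsIdx m v ≤ (m : ℤ) - 1 ∧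
    -(m : ℝ) + 2 * (clsIdx m v : ℝ) ≤ v ∧ v ≤ -(m : ℝ) + 2 * (clsIdx m v : ℝ) + 2 := by
  have hfl0 : 0 ≤ ⌊(v + m) / 2⌋ := Int.floor_nonneg.mpr (by linarith)
  have hm1 : (1 : ℤ) ≤ (m : ℤ) := by exact_mod_cast hm
  have hmin0 : 0 ≤ clsIdx m v := le_min (by omega) hfl0
  rcases le_or_gt ⌊(v + m) / 2⌋ ((m : ℤ) - 1) with h | h
  · have he : clsIdx m v = ⌊(v + m) / 2⌋ := min_eq_right h
    have h3 := Int.floor_le ((v + m) / 2)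
    have h4 := Int.lt_floor_add_one ((v + m) / 2)
    refine ⟨hmin0, min_le_left _ _, ?_, ?_⟩ <;> rw [he] <;> linarith
  · have he : clsIdx m v = (m : ℤ) - 1 := min_eq_left (by omega)
    have hge : ((m : ℤ) : ℝ) ≤ (v + m) / 2 := Int.le_floor.mp (by omega)
    refine ⟨hmin0, min_le_left _ _, ?_, ?_⟩ <;> rw [he] <;> push_cast at hge ⊢ <;> linarith

lemma clsIdx_close (m : ℕ) (hm : 1 ≤ m) (v w : ℝ) (hv1 : -(m : ℝ) ≤ v) (hv2 : v ≤ m)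
    (hw1 : -(m : ℝ) ≤ w) (hw2 : w ≤ m) (h : clsIdx m v = clsIdx m w) : |v - w| ≤ 2 := by
  obtain ⟨-, -, hv3, hv4⟩ := clsIdx_spec m hm v hv1 hv2
  obtain ⟨-, -, hw3, hw4⟩ := clsIdx_spec m hm w hw1 hw2
  rw [h] at hv3 hv4
  rw [abs_sub_le_iff]; constructor <;> linarith

theorem stmt2 (n k : ℕ) (hk : k < n) (X : Submodule ℝ (Fin n → ℝ))
    (hdim : Module.finrank ℝ X = n - k) :
    ∃ S : Finset (Fin n → ℝ), (∀ x ∈ S, x ∈ X) ∧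
      (∃ c : ℝ, 0 < c ∧ ∀ x ∈ S, ∀ y ∈ S, x ≠ y → dist x y = c) ∧
      (2 : ℝ) ^ (n - k) / ((n : ℝ) - k) ^ k ≤ S.card := by
  classical
  set m := n - k with hmdef
  have hm1 : 1 ≤ m := by omega
  -- basis matrix of X
  let b : Basis (Fin m) ℝ X := Module.finBasisOfFinrankEq ℝ X hdim
  let M : Matrix (Fin m) (Fin n) ℝ := fun j => ((b j : X) : Fin n → ℝ)
  have hMmem : ∀ j, M j ∈ X := fun j => (b j).2
  have hMind : LinearIndependent ℝ M :=
    b.linearIndependent.map' X.subtype X.ker_subtype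
  -- columns of M span ℝ^m
  have hspan : Submodule.span ℝ (Set.range Mᵀ) = ⊤ := by
    apply Submodule.eq_top_of_finrank_eq
    change finrank ℝ (Submodule.span ℝ (Set.range M.col)) = _
    rw [← Matrix.rank_eq_finrank_span_cols, hMind.rank_matrix, Fintype.card_fin,
      Module.finrank_fin_fun]
  -- there is a column selection with nonzero determinant
  obtain ⟨s, hs_sub, hs_span, hs_ind⟩ := exists_linearIndependent ℝ (Set.range Mᵀ)
  rw [hspan] at hs_span
  let bs : Basis s ℝ (Fin m → ℝ) := Basis.mk hs_ind (by rw [Subtype.range_coe, hs_span])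
  haveI : Fintype s := FiniteDimensional.fintypeBasisIndex bs
  have hcards : Fintype.card s = m := by
    rw [← Module.finrank_eq_card_basis bs, Module.finrank_fin_fun]
  let e : Fin m ≃ s := (Fintype.equivFinOfCardEq hcards).symm
  let g1 : Fin m → Fin n := fun l => (hs_sub (e l).2).choose
  have hg1 : ∀ l, Mᵀ (g1 l) = (e l : Fin m → ℝ) := fun l => (hs_sub (e l).2).choose_spec
  have hdet1 : (M.submatrix id g1).det ≠ 0 := by
    have hind : LinearIndependent ℝ (fun l => (M.submatrix id g1)ᵀ l) := by
      have : (fun l => (M.submatrix id g1)ᵀ l) = fun l => ((e l : s) : Fin m → ℝ) := by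
        funext l; rw [← hg1 l]; rfl
      rw [this]
      exact hs_ind.comp e (e.injective.comp fun a b h => h)
    have := Matrix.linearIndependent_cols_iff_isUnit.mp hind
    exact (Matrix.isUnit_iff_isUnit_det _).mp this |>.ne_zero
  -- choose selection maximizing |det|
  obtain ⟨g, -, hgmax⟩ := Finset.exists_max_image (Finset.univ : Finset (Fin m → Fin n))
    (fun g' => |(M.submatrix id g').det|) ⟨g1, Finset.mem_univ _⟩
  set B : Matrix (Fin m) (Fin m) ℝ := M.submatrix id g with hBdef
  have hBdet : B.det ≠ 0 := by
    intro h0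
    have h := hgmax g1 (Finset.mem_univ _)
    rw [h0, abs_zero] at h
    exact hdet1 (abs_eq_zero.mp (le_antisymm h (abs_nonneg _)))
  have hBunit : IsUnit B.det := isUnit_iff_ne_zero.mpr hBdet
  set A : Matrix (Fin m) (Fin n) ℝ := B⁻¹ * M with hAdef
  -- rows of A are in X
  have hArow : ∀ j, A j ∈ X := by
    intro j
    have : A j = ∑ r, B⁻¹ j r • M r := by
      funext i
      rw [hAdef, Matrix.mul_apply]
      simp [Finset.sum_apply]
    rw [this]
    exact X.sum_mem fun r _ => X.smul_mem _ (hMmem r)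
  -- identity block
  have hAid : ∀ j l, A j (g l) = if j = l then 1 else 0 := by
    intro j l
    have : A j (g l) = (B⁻¹ * B) j l := by
      rw [hAdef, Matrix.mul_apply, Matrix.mul_apply]
      rfl
    rw [this, Matrix.nonsing_inv_mul B hBunit, Matrix.one_apply]
  -- g is injective
  have hginj : Function.Injective g := by
    intro l l' h
    by_contra hne
    have h1 := hAid l l
    have h2 := hAid l l'
    rw [h] at h1
    rw [h1, if_pos rfl] at h2
    rw [if_neg hne] at h2
    norm_num at h2
  -- entries of A are bounded by 1 (Cramer's rule + maximality)
  have hAbd : ∀ j i, |A j i| ≤ 1 := by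
    intro j i
    have hAv : A j i = (B⁻¹ *ᵥ fun r => M r i) j := by
      rw [hAdef, Matrix.mul_apply]; rfl
    have hcr : B.det • (B⁻¹ *ᵥ fun r => M r i) = Matrix.cramer B fun r => M r i :=
      Matrix.det_smul_inv_mulVec_eq_cramer B _ hBunit
    have hval : B.det * A j i = (B.updateCol j fun r => M r i).det := by
      rw [hAv, ← Matrix.cramer_apply, ← hcr]; simp
    have hup : B.updateCol j (fun r => M r i) = M.submatrix id (Function.update g j i) := by
      ext r l
      rw [Matrix.updateCol_apply, Matrix.submatrix_apply]
      by_cases h : l = j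
      · subst h; rw [if_pos rfl, Function.update_self]; rfl
      · rw [if_neg h, Function.update_of_ne h]; rfl
    have hle : |(B.updateCol j fun r => M r i).det| ≤ |B.det| := by
      rw [hup, hBdef]
      exact hgmax _ (Finset.mem_univ _)
    rw [← mul_le_mul_iff_right₀ (abs_pos.mpr hBdet), mul_one, ← abs_mul, hval]
    exact hle
  -- sign vectors
  let s2v : Bool → ℝ := fun t => if t then 1 else -1
  have hs2v : ∀ t, |s2v t| = 1 := by intro t; cases t <;> simp [s2v]
  let x : (Fin m → Bool) → (Fin n → ℝ) := fun ε i => ∑ j, s2v (ε j) * A j i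
  have hxX : ∀ ε, x ε ∈ X := by
    intro ε
    have : x ε = ∑ j, s2v (ε j) • A j := by
      funext i; simp [x, Finset.sum_apply]
    rw [this]
    exact X.sum_mem fun j _ => X.smul_mem _ (hArow j)
  have hxg : ∀ ε l, x ε (g l) = s2v (ε l) := by
    intro ε l
    simp only [x]
    rw [Finset.sum_congr rfl fun j _ => by rw [hAid j l]]
    simp
  have hxbd : ∀ ε i, |x ε i| ≤ m := by
    intro ε i
    calc |x ε i| ≤ ∑ j, |s2v (ε j) * A j i| := Finset.abs_sum_le_sum_abs _ _
    _ ≤ ∑ _j : Fin m, 1 := by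
        apply Finset.sum_le_sum
        intro j _
        rw [abs_mul, hs2v, one_mul]
        exact hAbd j i
    _ = m := by simp
  have hxinj : Function.Injective x := by
    intro ε δ h
    funext l
    have h2 : s2v (ε l) = s2v (δ l) := by rw [← hxg ε l, ← hxg δ l, h]
    cases hε' : ε l <;> cases hδ' : δ l <;> rw [hε', hδ'] at h2 <;>
      first
        | rfl
        | (exfalso; simp only [s2v, if_true, if_false] at h2; norm_num at h2)
  -- pigeonhole set-up
  set J : Finset (Fin n) := Finset.univ.image g with hJdef
  have hJcard : J.card = m := by
    rw [hJdef, Finset.card_image_of_injective _ hginj, Finset.card_univ, Fintype.card_fin]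
  have hJccard : Jᶜ.card = k := by
    rw [Finset.card_compl, hJcard, Fintype.card_fin]
    omega
  let f : (Fin m → Bool) → (Fin n → ℤ) := fun ε i => if i ∈ J then 0 else clsIdx m (x ε i)
  let T : Finset (Fin n → ℤ) :=
    Fintype.piFinset fun i => if i ∈ J then ({0} : Finset ℤ) else Finset.Icc 0 ((m : ℤ) - 1)
  have hmapsto : ∀ ε : Fin m → Bool, f ε ∈ T := by
    intro ε
    rw [Fintype.mem_piFinset]
    intro i
    simp only [f, T]
    split_ifs with h
    · simp
    · rw [Finset.mem_Icc]
      have := clsIdx_spec m hm1 (x ε i) (by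
        have := hxbd ε i; rw [abs_le] at this; linarith [this.1]) (by
        have := hxbd ε i; rw [abs_le] at this; linarith [this.2])
      exact ⟨this.1, this.2.1⟩
  have hTcard : T.card = m ^ k := by
    rw [Fintype.card_piFinset]
    rw [← Finset.prod_mul_prod_compl J
      (fun i => (if i ∈ J then ({0} : Finset ℤ) else Finset.Icc 0 ((m : ℤ) - 1)).card)]
    have h1 : ∏ i ∈ J, (if i ∈ J then ({0} : Finset ℤ) else Finset.Icc 0 ((m : ℤ) - 1)).card
        = 1 := by
      apply Finset.prod_eq_one
      intro i hi
      rw [if_pos hi]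
      simp
    have h2 : ∏ i ∈ Jᶜ, (if i ∈ J then ({0} : Finset ℤ) else Finset.Icc 0 ((m : ℤ) - 1)).card
        = m ^ k := by
      rw [Finset.prod_congr rfl fun i hi => by
        rw [if_neg (Finset.mem_compl.mp hi)]]
      rw [Finset.prod_const, hJccard]
      congr 1
      rw [Int.card_Icc]
      omega
    rw [h1, h2, one_mul]
  have hTpos : 0 < T.card := by rw [hTcard]; positivity
  obtain ⟨y, hyT, hymax⟩ := Finset.exists_max_image T
    (fun y => (Finset.univ.filter fun ε => f ε = y).card) (Finset.card_pos.mp hTpos)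
  set Fib : Finset (Fin m → Bool) := Finset.univ.filter (fun ε => f ε = y) with hFibdef
  have hsum : ∑ z ∈ T, (Finset.univ.filter fun ε => f ε = z).card = 2 ^ m := by
    rw [← Finset.card_eq_sum_card_fiberwise fun ε _ => hmapsto ε]
    simp [Finset.card_univ]
  have hpig : 2 ^ m ≤ m ^ k * Fib.card := by
    calc 2 ^ m = ∑ z ∈ T, (Finset.univ.filter fun ε => f ε = z).card := hsum.symm
    _ ≤ T.card * Fib.card := by
        have := Finset.sum_le_card_nsmul T
          (fun z => (Finset.univ.filter fun ε => f ε = z).card) Fib.card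
          (fun z hz => hymax z hz)
        simpa using this
    _ = m ^ k * Fib.card := by rw [hTcard]
  -- the equilateral set
  refine ⟨Fib.image x, ?_, ?_, ?_⟩
  · intro v hv
    obtain ⟨ε, -, rfl⟩ := Finset.mem_image.mp hv
    exact hxX ε
  · refine ⟨2, by norm_num, ?_⟩
    intro v hv w hw hvw
    obtain ⟨ε, hε, rfl⟩ := Finset.mem_image.mp hv
    obtain ⟨δ, hδ, rfl⟩ := Finset.mem_image.mp hw
    have hεδ : ε ≠ δ := fun h => hvw (by rw [h])
    -- upper bound
    have hub : dist (x ε) (x δ) ≤ 2 := by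
      rw [dist_pi_le_iff (by norm_num)]
      intro i
      rw [Real.dist_eq]
      by_cases h : i ∈ J
      · obtain ⟨l, -, rfl⟩ := Finset.mem_image.mp h
        rw [hxg, hxg]
        rcases ε l with _ | _ <;> rcases δ l with _ | _ <;> simp [s2v] <;> norm_num
      · have hfε : f ε = y := (Finset.mem_filter.mp hε).2
        have hfδ : f δ = y := (Finset.mem_filter.mp hδ).2
        have hcls : clsIdx m (x ε i) = clsIdx m (x δ i) := by
          have h1 := congrFun hfε i
          have h2 := congrFun hfδ i
          simp only [f, if_neg h] at h1 h2
          rw [h1, h2]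
        have h1 := hxbd ε i
        have h2 := hxbd δ i
        rw [abs_le] at h1 h2
        exact clsIdx_close m hm1 _ _ h1.1 h1.2 h2.1 h2.2 hcls
    -- lower bound
    have hlb : 2 ≤ dist (x ε) (x δ) := by
      obtain ⟨l, hl⟩ : ∃ l, ε l ≠ δ l := by
        by_contra h
        push_neg at h
        exact hεδ (funext h)
      calc (2 : ℝ) = dist (x ε (g l)) (x δ (g l)) := by
            rw [hxg, hxg, Real.dist_eq]
            rcases hε' : ε l with _ | _ <;> rcases hδ' : δ l with _ | _ <;>
              simp_all [s2v] <;> norm_num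
      _ ≤ dist (x ε) (x δ) := dist_le_pi_dist _ _ _
    linarith
  · have hcard : (Fib.image x).card = Fib.card := Finset.card_image_of_injective _ hxinj
    rw [hcard]
    have hnk : ((n : ℝ) - k) = (m : ℝ) := by
      rw [hmdef]
      push_cast [Nat.cast_sub hk.le]
      ring
    rw [hnk, div_le_iff₀ (by positivity)]
    have : (2 : ℝ) ^ m ≤ (m : ℝ) ^ k * Fib.card := by exact_mod_cast hpig
    linarith
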